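/- The linear endomorphism σ of Â_S determined by σ(c) = c and σ(A_{α,m}) = χ(α)·A_{α,m} is a Lie algebra automorphism of Â_S; it satisfies σ ∘ τ_C = τ_B ∘ σ; and consequently σ restricts to a Lie algebra isomorphism from the fixed-point subalgebra Ĉ_S = {u ∈ Â_S : τ_C(u) = u} onto the fixed-point subalgebra B̂_S = {u ∈ Â_S : τ_B(u) = u}. -/

import Mathlib

open scoped Classical

/-- The underlying vector space `ℂ ⊕ ((S × ℤ) →₀ ℂ)` of the trigonometric Lie algebra `Â_S`. -/
abbrev TrigA (S : Type*) := ℂ × ((S × ℤ) →₀ ℂ)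

/-- The central basis element `c`. -/
noncomputable def Acen (S : Type*) : TrigA S := (1, 0)

/-- The basis element `A_{α,m}`. -/
noncomputable def Agen {S : Type*} (α : S) (m : ℤ) : TrigA S := (0, Finsupp.single (α, m) 1)

/-- The value of the bracket on basis elements. -/
noncomputable def AbrkBasis {S : Type*} [AddCommGroup S] (χ : S → ℂˣ) (p q : S × ℤ) :
    TrigA S :=
  ((if p.1 + q.1 = 0 ∧ p.2 + q.2 = 0 then (p.2 : ℂ) else 0),
    Finsupp.single (p.1 + q.1, p.2 + q.2)
      (((χ (p.2 • q.1 - q.2 • p.1) : ℂˣ) : ℂ) - ((χ (q.2 • p.1 - p.2 • q.1) : ℂˣ) : ℂ)))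

/-- The Lie bracket of `Â_S`. -/
noncomputable def Abrk {S : Type*} [AddCommGroup S] (χ : S → ℂˣ) (x y : TrigA S) : TrigA S :=
  x.2.sum fun p a => y.2.sum fun q b => (a * b) • AbrkBasis χ p q

/-- The linear endomorphism of `Â_S` fixing `c` and sending `A_{α,m} ↦ cf(α,m) • A_{σ(α,m)}`. -/
noncomputable def twistA {S : Type*} (cf : S × ℤ → ℂ) (σ : S × ℤ → S × ℤ) :
    TrigA S →ₗ[ℂ] TrigA S :=
  LinearMap.prodMap LinearMap.id
    (Finsupp.lsum ℂ fun p => cf p • Finsupp.lsingle (σ p))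

/-- `τ_B(c) = c`, `τ_B(A_{α,m}) = −(−1)^m A_{−α,m}`. -/
noncomputable def tauB (S : Type*) [AddCommGroup S] : TrigA S →ₗ[ℂ] TrigA S :=
  twistA (fun p => -(-1 : ℂ) ^ p.2) (fun p => (-p.1, p.2))

/-- `τ_C(c) = c`, `τ_C(A_{α,m}) = −(−1)^m χ(2α) A_{−α,m}`. -/
noncomputable def tauC {S : Type*} [AddCommGroup S] (χ : S → ℂˣ) : TrigA S →ₗ[ℂ] TrigA S :=
  twistA (fun p => -(-1 : ℂ) ^ p.2 * ((χ (p.1 + p.1) : ℂˣ) : ℂ)) (fun p => (-p.1, p.2))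

/-- `τ_D(c) = c`, `τ_D(A_{α,m}) = −χ(2α) A_{−α,m}`. -/
noncomputable def tauD {S : Type*} [AddCommGroup S] (χ : S → ℂˣ) : TrigA S →ₗ[ℂ] TrigA S :=
  twistA (fun p => -((χ (p.1 + p.1) : ℂˣ) : ℂ)) (fun p => (-p.1, p.2))

/-- `σ(c) = c`, `σ(A_{α,m}) = χ(α)·A_{α,m}`. -/
noncomputable def sigmaA {S : Type*} [AddCommGroup S] (χ : S → ℂˣ) : TrigA S →ₗ[ℂ] TrigA S :=
  twistA (fun p => ((χ p.1 : ℂˣ) : ℂ)) (fun p => p)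


/- ------------------ auxiliary lemmas ------------------ -/

lemma twistA_fst' {S : Type*} (cf : S × ℤ → ℂ) (σ : S × ℤ → S × ℤ) (x : TrigA S) :
    (twistA cf σ x).1 = x.1 := rfl

lemma twistA_snd' {S : Type*} (cf : S × ℤ → ℂ) (σ : S × ℤ → S × ℤ)
    (hσ : Function.Injective σ) (x : TrigA S) (q : S × ℤ) :
    (twistA cf σ x).2 (σ q) = cf q * x.2 q := by
  classical
  simp only [twistA, LinearMap.prodMap_apply, Finsupp.lsum_apply, Finsupp.sum_apply,
    LinearMap.smul_apply, Finsupp.lsingle_apply, Finsupp.smul_apply, Finsupp.single_apply,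
    hσ.eq_iff, smul_eq_mul, mul_ite, mul_zero]
  rw [Finsupp.sum_ite_eq' x.2 q (fun p a => cf p * a)]
  split
  · rfl
  · rename_i h
    rw [Finsupp.notMem_support_iff.1 h, mul_zero]

lemma negmap_inj {S : Type*} [AddCommGroup S] :
    Function.Injective (fun p : S × ℤ => (-p.1, p.2)) := by
  intro p q h
  simp only [Prod.mk.injEq, neg_inj] at h
  exact Prod.ext h.1 h.2

lemma sigmaA_fst {S : Type*} [AddCommGroup S] (χ : S → ℂˣ) (x : TrigA S) :
    (sigmaA χ x).1 = x.1 := rfl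

lemma sigmaA_snd {S : Type*} [AddCommGroup S] (χ : S → ℂˣ) (x : TrigA S) (q : S × ℤ) :
    (sigmaA χ x).2 q = ((χ q.1 : ℂˣ) : ℂ) * x.2 q :=
  twistA_snd' _ _ (fun _ _ h => h) x q

lemma tau_snd {S : Type*} [AddCommGroup S] (cf : S × ℤ → ℂ) (x : TrigA S) (q : S × ℤ) :
    (twistA cf (fun p : S × ℤ => (-p.1, p.2)) x).2 q
      = cf (-q.1, q.2) * x.2 (-q.1, q.2) := by
  have h := twistA_snd' cf (fun p : S × ℤ => (-p.1, p.2)) negmap_inj x (-q.1, q.2)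
  simpa using h

lemma chi0 {S : Type*} [AddCommGroup S] (χ : S → ℂˣ)
    (hχ : ∀ a b : S, χ (a + b) = χ a * χ b) : ((χ 0 : ℂˣ) : ℂ) = 1 := by
  have h := hχ 0 0
  rw [add_zero] at h
  have h1 : χ 0 = 1 := by
    have h2 : χ 0 * 1 = χ 0 * χ 0 := by rw [mul_one, ← h]
    exact (mul_left_cancel h2).symm
  rw [h1, Units.val_one]

lemma chiadd {S : Type*} [AddCommGroup S] (χ : S → ℂˣ)
    (hχ : ∀ a b : S, χ (a + b) = χ a * χ b) (a b : S) :
    ((χ (a + b) : ℂˣ) : ℂ) = ((χ a : ℂˣ) : ℂ) * ((χ b : ℂˣ) : ℂ) := by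
  rw [hχ, Units.val_mul]

lemma chineg {S : Type*} [AddCommGroup S] (χ : S → ℂˣ)
    (hχ : ∀ a b : S, χ (a + b) = χ a * χ b) (a : S) :
    ((χ a : ℂˣ) : ℂ) * ((χ (-a) : ℂˣ) : ℂ) = 1 := by
  rw [← chiadd χ hχ, add_neg_cancel, chi0 χ hχ]

lemma sigmaA_support {S : Type*} [AddCommGroup S] (χ : S → ℂˣ) (x : TrigA S) :
    (sigmaA χ x).2.support = x.2.support := by
  ext q
  simp only [Finsupp.mem_support_iff, sigmaA_snd, mul_ne_zero_iff]
  constructor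
  · exact fun h => h.2
  · exact fun h => ⟨Units.ne_zero _, h⟩

lemma sigmaA_basisbrk {S : Type*} [AddCommGroup S] (χ : S → ℂˣ)
    (hχ : ∀ a b : S, χ (a + b) = χ a * χ b) (p q : S × ℤ) :
    sigmaA χ (AbrkBasis χ p q)
      = (((χ p.1 : ℂˣ) : ℂ) * ((χ q.1 : ℂˣ) : ℂ)) • AbrkBasis χ p q := by
  apply Prod.ext
  · rw [sigmaA_fst]
    show _ = (((χ p.1 : ℂˣ) : ℂ) * ((χ q.1 : ℂˣ) : ℂ)) * _
    unfold AbrkBasis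
    by_cases h : p.1 + q.1 = 0 ∧ p.2 + q.2 = 0
    · simp only [h, if_true]
      rw [← chiadd χ hχ, h.1, chi0 χ hχ, one_mul]
    · simp [h]
  · ext t
    rw [sigmaA_snd]
    show _ = (((χ p.1 : ℂˣ) : ℂ) * ((χ q.1 : ℂˣ) : ℂ)) • (_ : ℂ)
    unfold AbrkBasis
    simp only [Finsupp.smul_apply, Finsupp.single_apply, smul_eq_mul, mul_ite, mul_zero]
    split
    · rename_i h
      rw [← chiadd χ hχ]
      rw [← h]
    · rfl

lemma sigmaA_brk {S : Type*} [AddCommGroup S] (χ : S → ℂˣ)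
    (hχ : ∀ a b : S, χ (a + b) = χ a * χ b) (x y : TrigA S) :
    sigmaA χ (Abrk χ x y) = Abrk χ (sigmaA χ x) (sigmaA χ y) := by
  unfold Abrk Finsupp.sum
  rw [sigmaA_support, sigmaA_support]
  rw [map_sum]
  refine Finset.sum_congr rfl fun p hp => ?_
  rw [map_sum]
  refine Finset.sum_congr rfl fun q hq => ?_
  rw [map_smul, sigmaA_basisbrk χ hχ, sigmaA_snd, sigmaA_snd, smul_smul]
  ring_nf

lemma sigmaA_leftinv {S : Type*} [AddCommGroup S] (χ : S → ℂˣ)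
    (hχ : ∀ a b : S, χ (a + b) = χ a * χ b) (x : TrigA S) :
    sigmaA (fun s => (χ s)⁻¹) (sigmaA χ x) = x := by
  apply Prod.ext
  · rfl
  · ext q
    rw [sigmaA_snd, sigmaA_snd]
    rw [← mul_assoc]
    norm_cast
    rw [inv_mul_cancel, Units.val_one, one_mul]

lemma sigmaA_rightinv {S : Type*} [AddCommGroup S] (χ : S → ℂˣ)
    (hχ : ∀ a b : S, χ (a + b) = χ a * χ b) (x : TrigA S) :
    sigmaA χ (sigmaA (fun s => (χ s)⁻¹) x) = x := by
  apply Prod.ext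
  · rfl
  · ext q
    rw [sigmaA_snd, sigmaA_snd]
    rw [← mul_assoc]
    norm_cast
    rw [mul_inv_cancel, Units.val_one, one_mul]

lemma sigmaA_bij {S : Type*} [AddCommGroup S] (χ : S → ℂˣ)
    (hχ : ∀ a b : S, χ (a + b) = χ a * χ b) :
    Function.Bijective (sigmaA χ) :=
  Function.bijective_iff_has_inverse.2
    ⟨sigmaA (fun s => (χ s)⁻¹), sigmaA_leftinv χ hχ, sigmaA_rightinv χ hχ⟩

lemma sigmaA_comm {S : Type*} [AddCommGroup S] (χ : S → ℂˣ)
    (hχ : ∀ a b : S, χ (a + b) = χ a * χ b) :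
    (sigmaA χ).comp (tauC χ) = (tauB S).comp (sigmaA χ) := by
  apply LinearMap.ext
  intro x
  apply Prod.ext
  · simp only [LinearMap.comp_apply, tauB, tauC]
    rw [sigmaA_fst, twistA_fst', twistA_fst', sigmaA_fst]
  · ext q
    simp only [LinearMap.comp_apply, tauB, tauC]
    rw [sigmaA_snd, tau_snd, tau_snd, sigmaA_snd]
    simp only
    rw [chiadd χ hχ]
    linear_combination (-(-1:ℂ)^q.2 * ((χ (-q.1) : ℂˣ) : ℂ) * x.2 (-q.1, q.2)) * (chineg χ hχ q.1)

theorem stmt2 {S : Type*} [AddCommGroup S] (χ : S → ℂˣ)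
    (hχ : ∀ a b : S, χ (a + b) = χ a * χ b) :
    -- σ takes the prescribed values on `c` and on the basis elements
    (sigmaA χ (Acen S) = Acen S) ∧
    (∀ (α : S) (m : ℤ), sigmaA χ (Agen α m) = ((χ α : ℂˣ) : ℂ) • Agen α m) ∧
    -- σ is a Lie algebra automorphism of `Â_S`
    Function.Bijective (sigmaA χ) ∧
    (∀ x y : TrigA S, sigmaA χ (Abrk χ x y) = Abrk χ (sigmaA χ x) (sigmaA χ y)) ∧
    -- σ ∘ τ_C = τ_B ∘ σ
    (sigmaA χ).comp (tauC χ) = (tauB S).comp (sigmaA χ) ∧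
    -- hence σ restricts to a bijection from `Ĉ_S = {u : τ_C u = u}` onto
    -- `B̂_S = {u : τ_B u = u}` (a Lie algebra isomorphism, by the above)
    Set.BijOn (sigmaA χ) {u : TrigA S | tauC χ u = u} {u : TrigA S | tauB S u = u} := by
  refine ⟨?_, ?_, sigmaA_bij χ hχ, sigmaA_brk χ hχ, sigmaA_comm χ hχ, ?_⟩
  · apply Prod.ext
    · rfl
    · ext q
      rw [sigmaA_snd]
      show _ * (0 : (S × ℤ) →₀ ℂ) q = (0 : (S × ℤ) →₀ ℂ) q
      simp
  · intro α m
    apply Prod.ext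
    · show (0:ℂ) = ((χ α : ℂˣ) : ℂ) • (0:ℂ)
      simp
    · ext q
      rw [sigmaA_snd]
      show _ = ((χ α : ℂˣ) : ℂ) • (Finsupp.single (α, m) (1:ℂ)) q
      rw [smul_eq_mul]
      classical
      rcases eq_or_ne q (α, m) with h | h
      · subst h; rfl
      · show ((χ q.1 : ℂˣ) : ℂ) * (Agen α m).2 q = _
        unfold Agen
        simp [Finsupp.single_apply, (Ne.symm h)]
  · have hcomm : ∀ u : TrigA S, sigmaA χ (tauC χ u) = tauB S (sigmaA χ u) := fun u =>
      congrFun (congrArg DFunLike.coe (sigmaA_comm χ hχ)) u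
    refine ⟨?_, ?_, ?_⟩
    · intro u hu
      show tauB S (sigmaA χ u) = sigmaA χ u
      rw [← hcomm u, Set.mem_setOf_eq.mp hu]
    · exact fun a _ b _ h => (sigmaA_bij χ hχ).1 h
    · intro v hv
      obtain ⟨u, hu⟩ := (sigmaA_bij χ hχ).2 v
      refine ⟨u, ?_, hu⟩
      show tauC χ u = u
      apply (sigmaA_bij χ hχ).1
      rw [hcomm u, hu, Set.mem_setOf_eq.mp hv]
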